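/- Let G be a connected finite simple undirected graph and S ⊆ V with |S| ≥ 2. If every vertex v ∉ S satisfies N_S(v) = ∅ or N_S(v) = S, then S is a critical set of G. -/

import Mathlib

open Matrix
open scoped Classical

/-- `S` is a critical set of `G`: `S` is nonempty and there is a nonzero eigenvector of the
Laplacian of `G` vanishing outside `S`. -/
def IsCriticalSet {V : Type*} [Fintype V] [DecidableEq V] (G : SimpleGraph V) (S : Set V) :
    Prop :=
  S.Nonempty ∧ ∃ (lam : ℝ) (y : V → ℝ), y ≠ 0 ∧
    G.lapMatrix ℝ *ᵥ y = lam • y ∧ ∀ v ∉ S, y v = 0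

/-- `S` is a perfect critical set of `G`: some inducing eigenvector vanishes outside `S` and is
nonzero at every vertex of `S`. -/
def IsPerfectCriticalSet {V : Type*} [Fintype V] [DecidableEq V] (G : SimpleGraph V)
    (S : Set V) : Prop :=
  S.Nonempty ∧ ∃ (lam : ℝ) (y : V → ℝ), y ≠ 0 ∧
    G.lapMatrix ℝ *ᵥ y = lam • y ∧ (∀ v ∉ S, y v = 0) ∧ ∀ v ∈ S, y v ≠ 0

/-- `S` is a minimal perfect critical set of `G`: a perfect critical set none of whose proper
subsets is a perfect critical set. -/
def IsMinimalPerfectCriticalSet {V : Type*} [Fintype V] [DecidableEq V] (G : SimpleGraph V)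
    (S : Set V) : Prop :=
  IsPerfectCriticalSet G S ∧ ∀ T : Set V, T ⊂ S → ¬ IsPerfectCriticalSet G T

/-- Proposition 3: if every vertex outside `S` is adjacent either to no vertex of `S` or to
every vertex of `S`, and `|S| ≥ 2`, then `S` is a critical set of the connected graph `G`. -/
theorem critical_of_all_or_nothing_neighbors {V : Type*} [Fintype V] [DecidableEq V]
    (G : SimpleGraph V) (hG : G.Connected) (S : Set V) (hS : 2 ≤ S.ncard)
    (h : ∀ v ∉ S, (∀ u ∈ S, ¬ G.Adj v u) ∨ (∀ u ∈ S, G.Adj v u)) :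
    IsCriticalSet G S := by
  classical
  -- the Laplacian as a symmetric operator on Euclidean space
  set L := G.lapMatrix ℝ with hL
  have hHerm : L.IsHermitian := (G.posSemidef_lapMatrix ℝ).1
  set T : EuclideanSpace ℝ V →ₗ[ℝ] EuclideanSpace ℝ V := Matrix.toEuclideanLin L with hTdef
  have hT : T.IsSymmetric := Matrix.isHermitian_iff_isSymmetric.mp hHerm
  -- column sums of L vanish
  have hcol : ∀ u : V, ∑ v : V, L v u = 0 := by
    intro u
    have h1 := congrFun (G.lapMatrix_mulVec_const_eq_zero (R := ℝ)) u
    rw [mulVec] at h1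
    simp only [dotProduct, mul_one] at h1
    calc ∑ v : V, L v u = ∑ v : V, L u v := by
          refine Finset.sum_congr rfl fun v _ => ?_
          exact congrFun (congrFun (G.isSymm_lapMatrix (R := ℝ)) u) v
      _ = 0 := h1
  -- key: L maps the space of sum-zero vectors supported on S to itself
  have key : ∀ y : V → ℝ, (∀ v ∉ S, y v = 0) → (∑ v, y v = 0) →
      (∀ v ∉ S, (L *ᵥ y) v = 0) ∧ (∑ v, (L *ᵥ y) v = 0) := by
    intro y hy0 hysum
    constructor
    · intro v hv
      rw [G.lapMatrix_mulVec_apply, hy0 v hv, mul_zero, zero_sub, neg_eq_zero]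
      rcases h v hv with hnone | hall
      · refine Finset.sum_eq_zero fun u hu => ?_
        rw [SimpleGraph.mem_neighborFinset] at hu
        refine hy0 u fun huS => hnone u huS hu
      · rw [Finset.sum_subset (Finset.subset_univ _)]
        · exact hysum
        · intro u _ hu
          rw [SimpleGraph.mem_neighborFinset] at hu
          exact hy0 u fun huS => hu (hall u huS)
    · simp_rw [mulVec, dotProduct]
      rw [Finset.sum_comm]
      simp_rw [← Finset.sum_mul, hcol, zero_mul, Finset.sum_const_zero]
  -- the submodule of sum-zero vectors supported on `S`
  set W : Submodule ℝ (EuclideanSpace ℝ V) :=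
    { carrier := {y | (∀ v ∉ S, y v = 0) ∧ ∑ v, y v = 0}
      add_mem' := by
        rintro a b ⟨ha0, hasum⟩ ⟨hb0, hbsum⟩
        refine ⟨fun v hv => ?_, ?_⟩
        · show a v + b v = 0
          rw [ha0 v hv, hb0 v hv, add_zero]
        · show ∑ v, (a v + b v) = 0
          rw [Finset.sum_add_distrib, hasum, hbsum, add_zero]
      zero_mem' := ⟨fun v _ => rfl, Finset.sum_const_zero⟩
      smul_mem' := by
        rintro c a ⟨ha0, hasum⟩
        refine ⟨fun v hv => ?_, ?_⟩
        · show c * a v = 0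
          rw [ha0 v hv, mul_zero]
        · show ∑ v, c * a v = 0
          rw [← Finset.mul_sum, hasum, mul_zero] } with hW
  have hmemW : ∀ y : EuclideanSpace ℝ V,
      y ∈ W ↔ (∀ v ∉ S, y v = 0) ∧ ∑ v, y v = 0 := fun y => Iff.rfl
  -- T maps W into W
  have hTapp : ∀ (y : EuclideanSpace ℝ V) (v : V), T y v = (L *ᵥ y) v := fun y v => rfl
  have hinv : ∀ y ∈ W, T y ∈ W := by
    intro y hy
    obtain ⟨h1, h2⟩ := key y hy.1 hy.2
    exact ⟨fun v hv => h1 v hv, h2⟩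
  -- W is nontrivial
  obtain ⟨a, ha, b, hb, hab⟩ :=
    (Set.one_lt_ncard (S.toFinite)).mp (by omega)
  set y0 : EuclideanSpace ℝ V := WithLp.toLp 2 (Pi.single a 1 - Pi.single b 1 : V → ℝ) with hy0
  have hy0mem : y0 ∈ W := by
    constructor
    · intro v hv
      have hva : v ≠ a := fun hva => hv (hva ▸ ha)
      have hvb : v ≠ b := fun hvb => hv (hvb ▸ hb)
      show (Pi.single a 1 - Pi.single b 1 : V → ℝ) v = 0
      simp [Pi.single_eq_of_ne hva, Pi.single_eq_of_ne hvb]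
    · show ∑ v, (Pi.single a 1 - Pi.single b 1 : V → ℝ) v = 0
      simp [Pi.sub_apply, Finset.sum_sub_distrib, Finset.sum_pi_single]
  have hy0ne : y0 ≠ 0 := by
    intro hc
    have : y0 a = 0 := by rw [hc]; rfl
    rw [hy0] at this
    simp only [PiLp.toLp_apply, Pi.sub_apply, Pi.single_eq_same, Pi.single_eq_of_ne hab] at this
    norm_num at this
  have hWnt : Nontrivial W := nontrivial_of_ne ⟨y0, hy0mem⟩ 0 (by
    simp only [ne_eq, Submodule.mk_eq_zero]; exact hy0ne)
  -- restrict T to W and take an eigenvector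
  set T' : W →ₗ[ℝ] W := T.restrict hinv with hT'def
  have hT' : T'.IsSymmetric := hT.restrict_invariant hinv
  have hfr : Module.finrank ℝ W = Module.finrank ℝ W := rfl
  have hpos : 0 < Module.finrank ℝ W := Module.finrank_pos
  obtain ⟨w, lam, hwev⟩ : ∃ (w : W) (lam : ℝ), w ≠ 0 ∧ T' w = lam • w := by
    have hev := hT'.hasEigenvector_eigenvectorBasis hfr ⟨0, hpos⟩
    exact ⟨_, _, hev.2, hev.apply_eq_smul⟩
  obtain ⟨hwne, hweq⟩ := hwev
  -- assemble the final eigenvector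
  refine ⟨?_, lam, (w : EuclideanSpace ℝ V), ?_, ?_, ?_⟩
  · exact ⟨a, ha⟩
  · intro hc
    exact hwne (ZeroMemClass.coe_eq_zero.mp (by simpa using congrArg (WithLp.toLp 2) hc))
  · have : T (w : EuclideanSpace ℝ V) = lam • (w : EuclideanSpace ℝ V) := by
      have h1 : T (w : EuclideanSpace ℝ V) = ((T' w : W) : EuclideanSpace ℝ V) := rfl
      rw [h1, hweq]; rfl
    funext v
    have := congrFun (congrArg (fun z : EuclideanSpace ℝ V => (z : V → ℝ)) this) v
    simpa [hTapp] using this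
  · exact fun v hv => w.2.1 v hv
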